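/- Let F be a summable ball kernel, let φ be an ultrametric wavelet with ball I and ψ an ultrametric wavelet with ball J, and suppose I is a strict subset of J. Then 𝓘[φ, ψ](x) = 0 for every x ∈ ℚ_p. -/

import Mathlib

open MeasureTheory

/-- The index (base-`p` logarithm of the radius) of the smallest ball of `ℚ_[p]`
containing the two points `x` and `y` (for `x ≠ y`): its radius is `‖x - y‖ = p ^ (-(x-y).valuation)`. -/
noncomputable def supIdx {p : ℕ} [Fact p.Prime] (x y : ℚ_[p]) : ℤ := -(x - y).valuation

/-- The index of the smallest ball containing the three points `x`, `ξ`, `η`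
(for pairwise distinct points): its radius is `max (‖x-ξ‖, ‖x-η‖, ‖ξ-η‖)`. -/
noncomputable def sup3Idx {p : ℕ} [Fact p.Prime] (x ξ η : ℚ_[p]) : ℤ :=
  max (supIdx x ξ) (max (supIdx x η) (supIdx ξ η))

/-- A ball kernel: a function on balls of `ℚ_[p]`, encoded as a function of a center and
an index (log_p of the radius), independent of the choice of center in the ball. -/
def IsBallKernel {p : ℕ} [Fact p.Prime] (F : ℚ_[p] → ℤ → ℂ) : Prop :=
  ∀ c c' : ℚ_[p], ∀ γ : ℤ, dist c c' ≤ (p : ℝ) ^ γ → F c γ = F c' γ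

/-- Summability of a ball kernel: for every ball `B(c, p^γ₀)`,
`Σ_{γ > γ₀} ‖F(B(c, p^γ))‖ (p^γ - p^(γ-1)) < ∞`. -/
def KernelSummable {p : ℕ} [Fact p.Prime] (F : ℚ_[p] → ℤ → ℂ) : Prop :=
  ∀ c : ℚ_[p], ∀ γ₀ : ℤ, Summable (fun n : ℕ =>
    ‖F c (γ₀ + 1 + n)‖ * ((p : ℝ) ^ (γ₀ + 1 + (n : ℤ)) - (p : ℝ) ^ (γ₀ + (n : ℤ))))

/-- An ultrametric wavelet with ball `B(c, p^γ)`: vanishes outside the ball, is constant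
on each of the `p` maximal subballs (balls of radius `p^(γ-1)`), has zero mean, and is
not identically zero. -/
def IsWavelet {p : ℕ} [Fact p.Prime] [MeasurableSpace ℚ_[p]] (μ : Measure ℚ_[p])
    (ψ : ℚ_[p] → ℂ) (c : ℚ_[p]) (γ : ℤ) : Prop :=
  (∀ x, (p : ℝ) ^ γ < dist x c → ψ x = 0) ∧
    (∀ x y, dist x y ≤ (p : ℝ) ^ (γ - 1) → ψ x = ψ y) ∧
    (∫ x, ψ x ∂μ) = 0 ∧ ψ ≠ 0

/-- The eigenvalue `λ_I = T(I) ν(I) + Σ_{J > I} T(J) (ν(J) - ν(J,I))` attached to the ball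
`I = B(c, p^γI)` and the ball kernel `T`. -/
noncomputable def lamBall {p : ℕ} [Fact p.Prime] (T : ℚ_[p] → ℤ → ℂ) (c : ℚ_[p]) (γI : ℤ) : ℂ :=
  T c γI * (((p : ℝ) ^ γI : ℝ) : ℂ) +
    ∑' n : ℕ, T c (γI + 1 + n) *
      (((p : ℝ) ^ (γI + 1 + (n : ℤ)) - (p : ℝ) ^ (γI + (n : ℤ)) : ℝ) : ℂ)

/-- The coefficient `Φ_{I,J}` for balls `J = B(c, p^γJ) ⊊ I = B(c, p^γI)`. -/
noncomputable def PhiIJ {p : ℕ} [Fact p.Prime] (F : ℚ_[p] → ℤ → ℂ) (c : ℚ_[p])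
    (γI γJ : ℤ) : ℂ :=
  (((p : ℝ) ^ (2 * (γI - 1)) : ℝ) : ℂ) * F c γI - (((p : ℝ) ^ (2 * γJ) : ℝ) : ℂ) * F c γJ -
    ∑ γ ∈ Finset.Ioo γJ γI, (((p : ℝ) ^ (2 * γ) - (p : ℝ) ^ (2 * γ - 2) : ℝ) : ℂ) * F c γ

/-- The (spatial) operator of the quadratic cascade equation:
`∫∫ F(sup(x,ξ,η)) f(ξ)(f(η) - f(x)) dμ(ξ) dμ(η) + ∫ G(sup(x,ξ))(f(x) - f(ξ)) dμ(ξ)`. -/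
noncomputable def cascadeOp {p : ℕ} [Fact p.Prime] [MeasurableSpace ℚ_[p]]
    (μ : Measure ℚ_[p]) (F G : ℚ_[p] → ℤ → ℂ) (f : ℚ_[p] → ℂ) (x : ℚ_[p]) : ℂ :=
  (∫ ξ, ∫ η, F x (sup3Idx x ξ η) * (f ξ * (f η - f x)) ∂μ ∂μ) +
    ∫ ξ, G x (supIdx x ξ) * (f x - f ξ) ∂μ

/-- `v` satisfies the quadratic cascade equation
`∂ₜ v(x,t) + ∫∫ F(sup(x,ξ,η)) v(ξ,t)(v(η,t) - v(x,t)) dμ(ξ) dμ(η)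
  + ∫ G(sup(x,ξ))(v(x,t) - v(ξ,t)) dμ(ξ) = 0` for all `x ∈ ℚ_p` and all `t > 0`. -/
def SatisfiesCascade {p : ℕ} [Fact p.Prime] [MeasurableSpace ℚ_[p]]
    (μ : Measure ℚ_[p]) (F G : ℚ_[p] → ℤ → ℂ) (v : ℚ_[p] → ℝ → ℂ) : Prop :=
  ∀ x : ℚ_[p], ∀ t : ℝ, 0 < t →
    HasDerivAt (fun s => v x s) (-(cascadeOp μ F G (fun y => v y t) x)) t

/-- The nonlinear interaction integral
`𝓘[φ,ψ](x) = ∫∫ F(sup(x,ξ,η)) φ(ξ)(ψ(η) - ψ(x)) dμ(ξ) dμ(η)`. -/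
noncomputable def IIntegral {p : ℕ} [Fact p.Prime] [MeasurableSpace ℚ_[p]]
    (μ : Measure ℚ_[p]) (F : ℚ_[p] → ℤ → ℂ) (φ ψ : ℚ_[p] → ℂ) (x : ℚ_[p]) : ℂ :=
  ∫ ξ, ∫ η, F x (sup3Idx x ξ η) * (φ ξ * (ψ η - ψ x)) ∂μ ∂μ


section Helpers

variable {p : ℕ} [Fact p.Prime]

private lemma one_lt_p : (1 : ℝ) < p := by exact_mod_cast (Fact.out : p.Prime).one_lt

private lemma dist_eq_pow_supIdx {x y : ℚ_[p]} (h : x ≠ y) :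
    dist x y = (p : ℝ) ^ supIdx x y := by
  rw [dist_eq_norm, supIdx, Padic.norm_eq_zpow_neg_valuation (sub_ne_zero.mpr h)]

private lemma supIdx_le_iff {x y : ℚ_[p]} (h : x ≠ y) {γ : ℤ} :
    supIdx x y ≤ γ ↔ dist x y ≤ (p : ℝ) ^ γ := by
  rw [dist_eq_pow_supIdx h, zpow_le_zpow_iff_right₀ one_lt_p]

private lemma supIdx_eq_of_dist_eq {x y x' y' : ℚ_[p]} (h : x ≠ y) (h' : x' ≠ y')
    (hd : dist x y = dist x' y') : supIdx x y = supIdx x' y' := by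
  have e : (p : ℝ) ^ supIdx x y = (p : ℝ) ^ supIdx x' y' :=
    (dist_eq_pow_supIdx h).symm.trans (hd.trans (dist_eq_pow_supIdx h'))
  exact (zpow_right_strictMono₀ (one_lt_p (p := p))).injective e

/-- ultrametric isoceles: if `dist y z < dist x z` then `dist x y = dist x z`. -/
private lemma dist_eq_of_dist_lt {x y z : ℚ_[p]} (h : dist y z < dist x z) :
    dist x y = dist x z := by
  refine le_antisymm ?_ ?_
  · calc dist x y ≤ max (dist x z) (dist z y) := IsUltrametricDist.dist_triangle_max x z y
      _ = dist x z := max_eq_left (by rw [dist_comm z y]; exact h.le)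
  · rcases le_max_iff.mp (IsUltrametricDist.dist_triangle_max x y z) with h1 | h1
    · exact h1
    · exact absurd h1 (not_le.mpr h)

/-- Case `x ∈ I`: for `ξ ∈ I`, `ξ ≠ x` and `η` far from `x`, the triple sup index is
`supIdx x η`. -/
private lemma sup3Idx_far {x ξ η cI : ℚ_[p]} {γI : ℤ}
    (hxI : dist x cI ≤ (p : ℝ) ^ γI) (hξI : dist ξ cI ≤ (p : ℝ) ^ γI)
    (hξx : ξ ≠ x) (hη : (p : ℝ) ^ γI < dist η x) :
    sup3Idx x ξ η = supIdx x η := by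
  have hηx : η ≠ x := by
    rintro rfl; simp only [dist_self] at hη
    exact absurd hη (not_lt.mpr (zpow_pos (by exact_mod_cast (Fact.out : p.Prime).pos : (0:ℝ) < p) _).le)
  have hxξ : dist x ξ ≤ (p : ℝ) ^ γI :=
    le_trans (IsUltrametricDist.dist_triangle_max x cI ξ)
      (max_le hxI (by rw [dist_comm]; exact hξI))
  have hlt : dist x ξ < dist η x := lt_of_le_of_lt hxξ hη
  have hdist : dist η ξ = dist η x := dist_eq_of_dist_lt (by rwa [dist_comm x ξ] at hlt)
  have hξη : ξ ≠ η := by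
    rintro rfl; rw [dist_self] at hdist
    exact hηx (dist_eq_zero.mp hdist.symm)
  have h1 : supIdx x ξ ≤ γI := (supIdx_le_iff hξx.symm).mpr hxξ
  have h2 : γI < supIdx x η := by
    by_contra hc
    exact absurd ((supIdx_le_iff hηx.symm).mp (not_lt.mp hc)) (not_le.mpr (by rwa [dist_comm]))
  have h3 : supIdx ξ η = supIdx x η := by
    refine supIdx_eq_of_dist_eq hξη hηx.symm ?_
    rw [dist_comm ξ η, dist_comm x η, hdist]
  rw [sup3Idx, h3, max_self, max_eq_right (le_of_lt (lt_of_le_of_lt h1 h2))]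

/-- Case `x ∉ I`: for `ξ ∈ I` and `η ∉ {ξ, cI}`, the triple sup index with `ξ` equals
the one with `cI`. -/
private lemma sup3Idx_out {x ξ η cI : ℚ_[p]} {γI : ℤ}
    (hx : (p : ℝ) ^ γI < dist x cI) (hξI : dist ξ cI ≤ (p : ℝ) ^ γI)
    (hηξ : η ≠ ξ) (hηc : η ≠ cI) :
    sup3Idx x ξ η = sup3Idx x cI η := by
  have hpos : (0 : ℝ) < (p : ℝ) ^ γI := zpow_pos (by exact_mod_cast (Fact.out : p.Prime).pos) _
  have hxc : x ≠ cI := by rintro rfl; rw [dist_self] at hx; linarith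
  have hdxξ : dist x ξ = dist x cI := dist_eq_of_dist_lt (lt_of_le_of_lt hξI hx)
  have hxξ : x ≠ ξ := by
    rintro rfl; rw [dist_self] at hdxξ
    exact hxc (dist_eq_zero.mp hdxξ.symm)
  have ha : supIdx x ξ = supIdx x cI := supIdx_eq_of_dist_eq hxξ hxc hdxξ
  by_cases hηI : dist η cI ≤ (p : ℝ) ^ γI
  · -- η ∈ I : both triple sups equal supIdx x cI
    have hdxη : dist x η = dist x cI := dist_eq_of_dist_lt (lt_of_le_of_lt hηI hx)
    have hxη : x ≠ η := by
      rintro rfl; rw [dist_self] at hdxη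
      exact hxc (dist_eq_zero.mp hdxη.symm)
    have hb : supIdx x η = supIdx x cI := supIdx_eq_of_dist_eq hxη hxc hdxη
    have hγa : γI < supIdx x cI := by
      by_contra hc
      exact absurd ((supIdx_le_iff hxc).mp (not_lt.mp hc)) (not_le.mpr hx)
    have hξη : dist ξ η ≤ (p : ℝ) ^ γI :=
      le_trans (IsUltrametricDist.dist_triangle_max ξ cI η)
        (max_le hξI (by rw [dist_comm]; exact hηI))
    have hs1 : supIdx ξ η ≤ γI := (supIdx_le_iff hηξ.symm).mpr hξη
    have hs2 : supIdx cI η ≤ γI := (supIdx_le_iff hηc.symm).mpr (by rw [dist_comm]; exact hηI)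
    rw [sup3Idx, sup3Idx, ha, hb]
    rw [max_eq_left (le_of_lt (lt_of_le_of_lt hs1 hγa)),
      max_eq_left (le_of_lt (lt_of_le_of_lt hs2 hγa))]
  · -- η ∉ I : supIdx ξ η = supIdx cI η
    have hdηξ : dist η ξ = dist η cI :=
      dist_eq_of_dist_lt (lt_of_le_of_lt hξI (not_le.mp hηI))
    have hc : supIdx ξ η = supIdx cI η := by
      refine supIdx_eq_of_dist_eq hηξ.symm hηc.symm ?_
      rw [dist_comm ξ η, dist_comm cI η, hdηξ]
    rw [sup3Idx, sup3Idx, ha, hc]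

end Helpers

/-- If the ball `I` of `φ` is a strict subset of the ball `J` of `ψ`,
then `𝓘[φ,ψ](x) = 0` for every `x`. -/
theorem I_integral_strict_subset {p : ℕ} [Fact p.Prime]
    [MeasurableSpace ℚ_[p]] [BorelSpace ℚ_[p]]
    (μ : Measure ℚ_[p]) [μ.IsAddHaarMeasure] (hμ : μ (Metric.closedBall 0 1) = 1)
    (F : ℚ_[p] → ℤ → ℂ) (hF : IsBallKernel F) (hFs : KernelSummable F)
    (φ ψ : ℚ_[p] → ℂ) (cI cJ : ℚ_[p]) (γI γJ : ℤ)
    (hφ : IsWavelet μ φ cI γI) (hψ : IsWavelet μ ψ cJ γJ)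
    (hsub : Metric.closedBall cI ((p : ℝ) ^ γI) ⊂ Metric.closedBall cJ ((p : ℝ) ^ γJ)) :
    ∀ x : ℚ_[p], IIntegral μ F φ ψ x = 0 := by
  intro x
  classical
  obtain ⟨hφ0, hφc, hφint, hφne⟩ := hφ
  obtain ⟨hψ0, hψc, hψint, hψne⟩ := hψ
  have hppos : (0:ℝ) < (p:ℝ) := by exact_mod_cast (Fact.out : p.Prime).pos
  -- from strict inclusion, γI < γJ
  have hγ : γI < γJ := by
    by_contra hc
    push_neg at hc
    have hcIJ : dist cI cJ ≤ (p:ℝ) ^ γJ := by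
      have := hsub.1 (Metric.mem_closedBall_self (zpow_pos hppos γI).le)
      exact Metric.mem_closedBall.mp this
    have : Metric.closedBall cJ ((p:ℝ) ^ γJ) ⊆ Metric.closedBall cI ((p:ℝ) ^ γI) := by
      intro y hy
      have hy' : dist y cJ ≤ (p:ℝ) ^ γJ := Metric.mem_closedBall.mp hy
      refine Metric.mem_closedBall.mpr ?_
      calc dist y cI ≤ max (dist y cJ) (dist cJ cI) :=
            IsUltrametricDist.dist_triangle_max y cJ cI
        _ ≤ (p:ℝ) ^ γJ := max_le hy' (by rwa [dist_comm])
        _ ≤ (p:ℝ) ^ γI := zpow_le_zpow_right₀ (one_lt_p (p := p)).le hc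
    exact hsub.2 this
  have hγ' : (p:ℝ) ^ γI ≤ (p:ℝ) ^ (γJ - 1) :=
    zpow_le_zpow_right₀ (one_lt_p (p := p)).le (by omega)
  set g : ℚ_[p] → ℚ_[p] → ℂ := fun ξ η => F x (sup3Idx x ξ η) * (ψ η - ψ x) with hg
  have hae_ne : ∀ z : ℚ_[p], ∀ᵐ ξ ∂μ, ξ ≠ z := by
    intro z
    refine (MeasureTheory.ae_iff).mpr ?_
    have : {a : ℚ_[p] | ¬ a ≠ z} = {z} := by ext a; simp
    rw [this]; exact measure_singleton z
  -- key step: the inner integral is a.e. constant in ξ on the support of φ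
  have key : ∃ C : ℂ, ∀ᵐ ξ ∂μ, φ ξ * (∫ η, g ξ η ∂μ) = φ ξ * C := by
    by_cases hxI : dist x cI ≤ (p:ℝ) ^ γI
    · -- x ∈ I
      refine ⟨∫ η, F x (supIdx x η) * (ψ η - ψ x) ∂μ, ?_⟩
      filter_upwards [hae_ne x] with ξ hξx
      by_cases hξI : dist ξ cI ≤ (p:ℝ) ^ γI
      · congr 1
        refine integral_congr_ae (Filter.Eventually.of_forall fun η => ?_)
        by_cases hψη : ψ η = ψ x
        · simp [hg, hψη]
        · have hfar : (p:ℝ) ^ γI < dist η x := by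
            by_contra hc
            exact hψη (hψc η x (le_trans (not_lt.mp hc) hγ'))
          rw [hg]; simp only
          rw [sup3Idx_far hxI hξI hξx hfar]
      · rw [hφ0 ξ (not_le.mp hξI), zero_mul, zero_mul]
    · -- x ∉ I
      push_neg at hxI
      refine ⟨∫ η, g cI η ∂μ, ?_⟩
      refine Filter.Eventually.of_forall fun ξ => ?_
      by_cases hξI : dist ξ cI ≤ (p:ℝ) ^ γI
      · congr 1
        refine integral_congr_ae ?_
        filter_upwards [hae_ne ξ, hae_ne cI] with η hηξ hηc
        rw [hg]; simp only
        rw [sup3Idx_out hxI hξI hηξ hηc]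
      · rw [hφ0 ξ (not_le.mp hξI), zero_mul, zero_mul]
  obtain ⟨C, hC⟩ := key
  have hpull : ∀ ξ : ℚ_[p],
      (∫ η, F x (sup3Idx x ξ η) * (φ ξ * (ψ η - ψ x)) ∂μ) = φ ξ * ∫ η, g ξ η ∂μ := by
    intro ξ
    rw [← integral_const_mul]
    congr 1
    funext η
    rw [hg]; ring
  calc IIntegral μ F φ ψ x = ∫ ξ, φ ξ * (∫ η, g ξ η ∂μ) ∂μ := by
        rw [IIntegral]
        exact integral_congr_ae (Filter.Eventually.of_forall fun ξ => hpull ξ)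
    _ = ∫ ξ, φ ξ * C ∂μ := integral_congr_ae hC
    _ = (∫ ξ, φ ξ ∂μ) * C := integral_mul_const C φ
    _ = 0 := by rw [hφint, zero_mul]
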